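/- Every diagonal matrix A with diagonal entries ±1 and det A = 1 is a critical point of the function f_C(A) = Σᵢ cᵢ·Aᵢᵢ on SO(n), where 0 ≤ c₁ < c₂ < ... < cₙ. -/

import Mathlib

attribute [local instance] Matrix.normedAddCommGroup Matrix.normedSpace

/-- `A ∈ SO(n)` is a critical point of `f_C` if the derivative of `f_C` along every
differentiable curve in `SO(n)` through `A` vanishes at `A`. -/
def IsCritPt (n : ℕ) (c : Fin n → ℝ) (A : Matrix (Fin n) (Fin n) ℝ) : Prop :=
  ∀ γ : ℝ → Matrix (Fin n) (Fin n) ℝ,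
    (∀ t, γ t ∈ Matrix.specialOrthogonalGroup (Fin n) ℝ) → γ 0 = A →
    DifferentiableAt ℝ γ 0 → deriv (fun t => ∑ i, c i * γ t i i) 0 = 0

/-- Every diagonal matrix `A` with diagonal entries `±1` and `det A = 1`
is a critical point of `f_C(A) = ∑ i, c i * A i i` on `SO(n)`,
where `0 ≤ c 0 < c 1 < ... < c (n-1)`. -/
theorem diag_pm_one_isCritPt (n : ℕ) (c : Fin n → ℝ) (hc : StrictMono c) (hc0 : ∀ i, 0 ≤ c i)
    (A : Matrix (Fin n) (Fin n) ℝ) (hdiag : A.IsDiag)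
    (hpm : ∀ i, A i i = 1 ∨ A i i = -1) (hdet : A.det = 1) :
    IsCritPt n c A := by
  intro γ hγ hγ0 hdiffγ
  -- each entry is differentiable
  have hdiff : ∀ i j : Fin n, DifferentiableAt ℝ (fun t => γ t i j) 0 := by
    intro i j
    have h : (fun t => γ t i j) =
        (fun M : Matrix (Fin n) (Fin n) ℝ => M i j) ∘ γ := rfl
    rw [h]
    exact (((ContinuousLinearMap.proj (R := ℝ) (φ := fun _ : Fin n => ℝ) j).comp
      (ContinuousLinearMap.proj (R := ℝ)
        (φ := fun _ : Fin n => (Fin n) → ℝ) i)).differentiableAt).comp 0 hdiffγ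
  -- orthogonality: columns have norm 1
  have horth : ∀ t, ∀ i : Fin n, (∑ k, γ t k i * γ t k i) = 1 := by
    intro t i
    have h1 : (γ t) ∈ Matrix.orthogonalGroup (Fin n) ℝ :=
      ((Matrix.mem_specialOrthogonalGroup_iff).mp (hγ t)).1
    have h2 : star (γ t) * γ t = 1 := (Matrix.mem_orthogonalGroup_iff' (Fin n) ℝ).mp h1
    have h3 := congrFun (congrFun h2 i) i
    simpa [Matrix.mul_apply, Matrix.one_apply, Matrix.star_apply] using h3
  -- diagonal entries of the derivative vanish
  have hkey : ∀ i : Fin n, deriv (fun t => γ t i i) 0 = 0 := by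
    intro i
    have hconst : (fun t => ∑ k, γ t k i * γ t k i) = fun _ => (1 : ℝ) := by
      funext t; exact horth t i
    have hsum : HasDerivAt (fun t => ∑ k, γ t k i * γ t k i)
        (∑ k, (deriv (fun t => γ t k i) 0 * γ 0 k i +
          γ 0 k i * deriv (fun t => γ t k i) 0)) 0 := by
      apply HasDerivAt.fun_sum
      intro k _
      exact ((hdiff k i).hasDerivAt).mul ((hdiff k i).hasDerivAt)
    have hzero : (∑ k, (deriv (fun t => γ t k i) 0 * γ 0 k i +
        γ 0 k i * deriv (fun t => γ t k i) 0)) = 0 := by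
      have := hsum.deriv
      rw [hconst] at this
      simpa [deriv_const] using this.symm
    have hsingle : (∑ k, (deriv (fun t => γ t k i) 0 * γ 0 k i +
        γ 0 k i * deriv (fun t => γ t k i) 0)) =
        2 * A i i * deriv (fun t => γ t i i) 0 := by
      rw [Finset.sum_eq_single i]
      · rw [hγ0]; ring
      · intro k _ hk
        rw [hγ0, hdiag hk]; ring
      · intro h; exact absurd (Finset.mem_univ i) h
    rw [hsingle] at hzero
    rcases hpm i with h | h <;> rw [h] at hzero <;> linarith
  -- conclude
  have hsum : HasDerivAt (fun t => ∑ i, c i * γ t i i)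
      (∑ i, c i * deriv (fun t => γ t i i) 0) 0 := by
    apply HasDerivAt.fun_sum
    intro i _
    exact ((hdiff i i).hasDerivAt).const_mul (c i)
  rw [hsum.deriv]
  simp [hkey]
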